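/- Let d ≥ 1, ρ > 0, σ > 0. Let b : ℝ^d → ℝ^d be continuously differentiable and ℤ^d-periodic, and let m : ℝ^d → ℝ be twice continuously differentiable, ℤ^d-periodic, strictly positive, and satisfy (σ²/2)·Δm − div(b·m) = 0 on ℝ^d. Let φ = (φ₁, …, φ_n) : ℝ^d → ℝⁿ be twice continuously differentiable and ℤ^d-periodic, with linearly independent component functions. Define the n×n matrix H with entries H_{ij} = ∫_Q φ_i(x)·ℒφ_j(x)·m(x) dx. Then θᵀHθ > 0 for every nonzero θ ∈ ℝⁿ; in particular the symmetric part of H is positive definite and H is invertible. -/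

import Mathlib

open MeasureTheory Matrix
open scoped RealInnerProductSpace

noncomputable section

/-- `ℤ^d`-periodicity of a function on `ℝ^d`. -/
def ZdPeriodic {d : ℕ} {α : Type*} (f : EuclideanSpace ℝ (Fin d) → α) : Prop :=
  ∀ x : EuclideanSpace ℝ (Fin d), ∀ n : Fin d → ℤ,
    f (x + (WithLp.equiv 2 (Fin d → ℝ)).symm fun i => (n i : ℝ)) = f x

/-- The unit cube `Q = [0,1)^d`. -/
def unitCube (d : ℕ) : Set (EuclideanSpace ℝ (Fin d)) :=
  {x | ∀ i, x i ∈ Set.Ico (0 : ℝ) 1}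

/-- The Laplacian of `f` at `x`: the sum of the diagonal second derivatives. -/
def lapl {d : ℕ} (f : EuclideanSpace ℝ (Fin d) → ℝ) (x : EuclideanSpace ℝ (Fin d)) : ℝ :=
  ∑ i, iteratedFDeriv ℝ 2 f x ![EuclideanSpace.single i 1, EuclideanSpace.single i 1]

/-- The divergence of a vector field `F` at `x`. -/
def divg {d : ℕ} (F : EuclideanSpace ℝ (Fin d) → EuclideanSpace ℝ (Fin d))
    (x : EuclideanSpace ℝ (Fin d)) : ℝ :=
  ∑ i, fderiv ℝ (fun y => F y i) x (EuclideanSpace.single i 1)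

/-- The generator `ℒw(x) = ρ w(x) - (σ²/2) Δw(x) - b(x)·∇w(x)`. -/
def gen {d : ℕ} (ρ σ : ℝ) (b : EuclideanSpace ℝ (Fin d) → EuclideanSpace ℝ (Fin d))
    (w : EuclideanSpace ℝ (Fin d) → ℝ) (x : EuclideanSpace ℝ (Fin d)) : ℝ :=
  ρ * w x - σ ^ 2 / 2 * lapl w x - ⟪b x, gradient w x⟫

/-! ### Auxiliary material -/

section Aux

open Set

variable {d : ℕ}

local notation "E" => EuclideanSpace ℝ (Fin d)

/-- `i`-th partial derivative. -/
def pdi (i : Fin d) (f : E → ℝ) (x : E) : ℝ :=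
  fderiv ℝ f x (EuclideanSpace.single i 1)

lemma contDiff_pdi_one {f : E → ℝ} (hf : ContDiff ℝ 2 f) (i : Fin d) :
    ContDiff ℝ 1 (pdi i f) :=
  (hf.fderiv_right (m := 1) (by norm_num)).clm_apply contDiff_const

lemma continuous_pdi {f : E → ℝ} (hf : ContDiff ℝ 1 f) (i : Fin d) :
    Continuous (pdi i f) :=
  ((hf.fderiv_right (m := 0) (by norm_num)).clm_apply contDiff_const).continuous

lemma lapl_eq {f : E → ℝ} (hf : ContDiff ℝ 2 f) (x : E) :
    lapl f x = ∑ i, pdi i (pdi i f) x := by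
  have hd1 : ContDiff ℝ 1 (fderiv ℝ f) := hf.fderiv_right (by norm_num)
  refine Finset.sum_congr rfl fun i _ => ?_
  rw [iteratedFDeriv_two_apply]
  have h : pdi i f = fun y => (fderiv ℝ f y) (EuclideanSpace.single i 1) := rfl
  rw [h]
  simp only [pdi]
  rw [fderiv_clm_apply (hd1.differentiable one_ne_zero _) (differentiableAt_const _)]
  simp [Matrix.cons_val_zero, Matrix.cons_val_one]

lemma inner_gradient (v : E) (f : E → ℝ) (x : E) :
    ⟪v, gradient f x⟫ = ∑ i, v i * pdi i f x := by
  have h1 : ∀ i, gradient f x i = pdi i f x := by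
    intro i
    have h2 : gradient f x i = ⟪gradient f x, EuclideanSpace.single i 1⟫ := by
      rw [EuclideanSpace.inner_single_right]; simp
    rw [h2]
    have h3 : gradient f x = (InnerProductSpace.toDual ℝ E).symm (fderiv ℝ f x) := rfl
    rw [h3, InnerProductSpace.toDual_symm_apply]
    rfl
  rw [PiLp.inner_apply]
  simp only [RCLike.inner_apply, conj_trivial]
  exact Finset.sum_congr rfl fun i _ => by rw [h1, mul_comm]

lemma gen_eq {ρ σ : ℝ} {b : E → E} {f : E → ℝ} (hf : ContDiff ℝ 2 f) (x : E) :
    gen ρ σ b f x = ρ * f x - σ ^ 2 / 2 * ∑ i, pdi i (pdi i f) x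
      - ∑ i, b x i * pdi i f x := by
  rw [gen, lapl_eq hf, inner_gradient]

lemma pdi_mul {f g : E → ℝ} {x : E} (hf : DifferentiableAt ℝ f x)
    (hg : DifferentiableAt ℝ g x) (i : Fin d) :
    pdi i (fun y => f y * g y) x = pdi i f x * g x + f x * pdi i g x := by
  unfold pdi; rw [fderiv_fun_mul hf hg]; simp [mul_comm]; ring

lemma pdi_const_mul {f : E → ℝ} {x : E} (hf : DifferentiableAt ℝ f x) (c : ℝ) (i : Fin d) :
    pdi i (fun y => c * f y) x = c * pdi i f x := by
  unfold pdi; rw [fderiv_const_mul hf]; simp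

lemma pdi_mul_const {f : E → ℝ} {x : E} (hf : DifferentiableAt ℝ f x) (c : ℝ) (i : Fin d) :
    pdi i (fun y => f y * c) x = pdi i f x * c := by
  unfold pdi; rw [fderiv_mul_const hf]; simp [mul_comm]

lemma pdi_div_const {f : E → ℝ} {x : E} (hf : DifferentiableAt ℝ f x) (c : ℝ) (i : Fin d) :
    pdi i (fun y => f y / c) x = pdi i f x / c := by
  simp only [div_eq_mul_inv]; exact pdi_mul_const hf _ i

lemma pdi_sub {f g : E → ℝ} {x : E} (hf : DifferentiableAt ℝ f x)
    (hg : DifferentiableAt ℝ g x) (i : Fin d) :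
    pdi i (fun y => f y - g y) x = pdi i f x - pdi i g x := by
  unfold pdi; rw [fderiv_fun_sub hf hg]; simp

lemma pdi_sum {n : ℕ} {f : Fin n → E → ℝ} {x : E}
    (hf : ∀ j, DifferentiableAt ℝ (f j) x) (c : Fin n → ℝ) (i : Fin d) :
    pdi i (fun y => ∑ j, c j * f j y) x = ∑ j, c j * pdi i (f j) x := by
  unfold pdi
  rw [fderiv_fun_sum (fun j _ => ((hf j).const_mul (c j)))]
  simp only [ContinuousLinearMap.coe_sum', Finset.sum_apply]
  exact Finset.sum_congr rfl fun j _ => by rw [fderiv_const_mul (hf j)]; simp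

lemma fderiv_shift {f : E → ℝ} (hf : Differentiable ℝ f) (c x : E) :
    fderiv ℝ (fun y => f (y + c)) x = fderiv ℝ f (x + c) := by
  have h1 : HasFDerivAt (fun y : E => y + c) (ContinuousLinearMap.id ℝ _) x :=
    (hasFDerivAt_id x).add_const c
  have h2 : HasFDerivAt (fun y => f (y + c)) ((fderiv ℝ f (x + c)).comp
      (ContinuousLinearMap.id ℝ _)) x := ((hf (x + c)).hasFDerivAt).comp x h1
  simpa using h2.fderiv

lemma pdi_periodic {f : E → ℝ} (hf : Differentiable ℝ f) (hper : ZdPeriodic f) (i : Fin d) :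
    ZdPeriodic (pdi i f) := by
  intro x nn
  set c : E := (WithLp.equiv 2 (Fin d → ℝ)).symm fun j => (nn j : ℝ) with hc
  have hfc : f = fun y => f (y + c) := by funext y; rw [hper y nn]
  have h : fderiv ℝ f x = fderiv ℝ f (x + c) := by
    conv_lhs => rw [hfc]; rw [fderiv_shift hf c x]
  unfold pdi; rw [h]

lemma insertNth_one_eq {k : ℕ} (i : Fin (k + 1)) (x : Fin k → ℝ) :
    i.insertNth (1 : ℝ) x = i.insertNth (0 : ℝ) x + (Pi.single i 1 : Fin (k+1) → ℝ) := by
  funext j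
  refine Fin.succAboveCases i ?_ ?_ j
  · simp
  · intro l
    simp [Fin.insertNth_apply_succAbove, Pi.single_eq_of_ne (Fin.succAbove_ne i l)]

lemma pi_divergence_zero {k : ℕ} (g : (Fin (k + 1) → ℝ) → (Fin (k + 1) → ℝ))
    (hg : ContDiff ℝ 1 g) (hper : ∀ x i, g (x + Pi.single i 1) = g x) :
    ∫ x in Set.Icc (0 : Fin (k + 1) → ℝ) 1, ∑ i, fderiv ℝ g x (Pi.single i 1) i = 0 := by
  have hle : (0 : Fin (k + 1) → ℝ) ≤ 1 := fun i => zero_le_one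
  have hcont : Continuous fun x => ∑ i, fderiv ℝ g x (Pi.single i 1) i := by
    refine continuous_finset_sum _ fun i _ => ?_
    have h1 : Continuous (fderiv ℝ g) := hg.continuous_fderiv one_ne_zero
    exact (continuous_apply i).comp (h1.clm_apply continuous_const)
  have key := integral_divergence_of_hasFDerivAt_off_countable 0 1 hle g
    (fun x => fderiv ℝ g x) ∅ Set.countable_empty hg.continuous.continuousOn
    (fun x _ => (hg.differentiable one_ne_zero x).hasFDerivAt)
    (hcont.continuousOn.integrableOn_compact isCompact_Icc)
  rw [key]
  refine Finset.sum_eq_zero fun i _ => ?_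
  have h : ∀ x : Fin k → ℝ, g (i.insertNth ((1 : Fin (k+1) → ℝ) i) x) i
      = g (i.insertNth ((0 : Fin (k+1) → ℝ) i) x) i := by
    intro x
    have h0 : ((1 : Fin (k+1) → ℝ) i) = (1:ℝ) := rfl
    have h1 : ((0 : Fin (k+1) → ℝ) i) = (0:ℝ) := rfl
    rw [h0, h1, insertNth_one_eq, hper]
  rw [sub_eq_zero]
  exact setIntegral_congr_fun measurableSet_Icc fun x _ => h x

lemma fderiv_coord {F : E → E} {x : E} (hF : DifferentiableAt ℝ F x) (i : Fin d) (v : E) :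
    fderiv ℝ (fun z => F z i) x v = fderiv ℝ F x v i := by
  have h : (fun z => F z i) = (EuclideanSpace.proj (𝕜 := ℝ) i) ∘ F := rfl
  rw [h, fderiv_comp x (EuclideanSpace.proj (𝕜 := ℝ) i).differentiableAt hF,
    ContinuousLinearMap.fderiv]
  simp

lemma divg_integral_zero (hd : 1 ≤ d) (F : E → E) (hF : ContDiff ℝ 1 F)
    (hper : ZdPeriodic F) : ∫ x in unitCube d, divg F x = 0 := by
  obtain ⟨k, rfl⟩ : ∃ k, d = k + 1 := ⟨d - 1, (Nat.succ_pred_eq_of_pos hd).symm⟩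
  set L := PiLp.continuousLinearEquiv 2 ℝ (fun _ : Fin (k+1) => ℝ) with hL
  set g : (Fin (k+1) → ℝ) → (Fin (k+1) → ℝ) := fun y => L (F (L.symm y)) with hgdef
  have hFd : Differentiable ℝ F := hF.differentiable one_ne_zero
  have hg : ContDiff ℝ 1 g :=
    (L.toContinuousLinearMap.contDiff).comp (hF.comp L.symm.toContinuousLinearMap.contDiff)
  have hper' : ∀ y i, g (y + Pi.single i 1) = g y := by
    intro y i
    have h1 : (Pi.single i (1:ℝ) : Fin (k+1) → ℝ)
        = fun j => (((Pi.single i 1 : Fin (k+1) → ℤ) j : ℤ) : ℝ) := by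
      funext j
      rcases eq_or_ne j i with rfl | hne
      · simp
      · simp [Pi.single_eq_of_ne hne]
    have h2 : L.symm (y + Pi.single i 1) = L.symm y
        + (WithLp.equiv 2 (Fin (k+1) → ℝ)).symm
            (fun j => (((Pi.single i 1 : Fin (k+1) → ℤ) j : ℤ) : ℝ)) := by
      rw [map_add]
      congr 1
      exact congrArg L.symm h1
    simp only [hgdef]
    rw [h2, hper (L.symm y) (Pi.single i 1)]
  have hchain : ∀ y, fderiv ℝ g y
      = (L.toContinuousLinearMap.comp (fderiv ℝ F (L.symm y))).comp
          L.symm.toContinuousLinearMap := by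
    intro y
    have h1 : HasFDerivAt (fun y : Fin (k+1) → ℝ => F (L.symm y))
        ((fderiv ℝ F (L.symm y)).comp L.symm.toContinuousLinearMap) y :=
      (hFd (L.symm y)).hasFDerivAt.comp y L.symm.toContinuousLinearMap.hasFDerivAt
    have h2 : HasFDerivAt g (L.toContinuousLinearMap.comp
        ((fderiv ℝ F (L.symm y)).comp L.symm.toContinuousLinearMap)) y :=
      L.toContinuousLinearMap.hasFDerivAt.comp y h1
    rw [h2.fderiv]
    ext v
    simp
  have hpt : ∀ y, divg F (L.symm y) = ∑ i, fderiv ℝ g y (Pi.single i 1) i := by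
    intro y
    unfold divg
    refine Finset.sum_congr rfl fun i _ => ?_
    rw [fderiv_coord (hFd _) i, hchain]
    have hsingle : L.symm.toContinuousLinearMap (Pi.single i 1) = EuclideanSpace.single i 1 := rfl
    simp only [ContinuousLinearMap.coe_comp', Function.comp_apply, hsingle]
    rfl
  have hmp := EuclideanSpace.volume_preserving_symm_measurableEquiv_toLp (Fin (k+1))
  have hemb : MeasurableEmbedding ((MeasurableEquiv.toLp 2 (Fin (k+1) → ℝ)).symm) :=
    ((MeasurableEquiv.toLp 2 (Fin (k+1) → ℝ)).symm).measurableEmbedding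
  have hset : unitCube (k+1)
      = ((MeasurableEquiv.toLp 2 (Fin (k+1) → ℝ)).symm) ⁻¹'
          (Set.pi Set.univ fun _ => Ico (0:ℝ) 1) := by
    ext z
    simp [unitCube, MeasurableEquiv.coe_toLp_symm, Set.mem_pi]
  have key := hmp.setIntegral_preimage_emb hemb
    (fun y => divg F (L.symm y)) (Set.pi Set.univ fun _ => Ico (0:ℝ) 1)
  have hLsymm : ∀ x : EuclideanSpace ℝ (Fin (k+1)),
      L.symm (((MeasurableEquiv.toLp 2 (Fin (k+1) → ℝ)).symm) x) = x := fun x => rfl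
  rw [hset]
  calc ∫ x in ((MeasurableEquiv.toLp 2 (Fin (k+1) → ℝ)).symm) ⁻¹'
        (Set.pi Set.univ fun _ => Ico (0:ℝ) 1), divg F x
      = ∫ x in ((MeasurableEquiv.toLp 2 (Fin (k+1) → ℝ)).symm) ⁻¹'
        (Set.pi Set.univ fun _ => Ico (0:ℝ) 1),
          (fun y => divg F (L.symm y)) (((MeasurableEquiv.toLp 2 (Fin (k+1) → ℝ)).symm) x) := by
        refine setIntegral_congr_fun ?_ fun x _ => by simp only [hLsymm]
        exact hemb.measurable (MeasurableSet.univ_pi fun _ => measurableSet_Ico)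
    _ = ∫ y in (Set.pi Set.univ fun _ => Ico (0:ℝ) 1), divg F (L.symm y) := key
    _ = ∫ y in Set.Icc (0 : Fin (k+1) → ℝ) 1, divg F (L.symm y) := by
        refine setIntegral_congr_set ?_
        rw [volume_pi]
        exact Measure.univ_pi_Ico_ae_eq_Icc
    _ = ∫ y in Set.Icc (0 : Fin (k+1) → ℝ) 1, ∑ i, fderiv ℝ g y (Pi.single i 1) i :=
        setIntegral_congr_fun measurableSet_Icc fun y _ => hpt y
    _ = 0 := pi_divergence_zero g hg hper'

lemma measurableSet_unitCube : MeasurableSet (unitCube d) := by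
  have h : unitCube d
      = ((MeasurableEquiv.toLp 2 (Fin d → ℝ)).symm) ⁻¹' (Set.pi Set.univ fun _ => Ico (0:ℝ) 1) := by
    ext z; simp [unitCube, MeasurableEquiv.coe_toLp_symm, Set.mem_pi]
  rw [h]
  exact ((MeasurableEquiv.toLp 2 (Fin d → ℝ)).symm).measurable
    (MeasurableSet.univ_pi fun _ => measurableSet_Ico)

lemma integrableOn_unitCube (f : E → ℝ) (hf : Continuous f) :
    IntegrableOn f (unitCube d) := by
  set L := PiLp.continuousLinearEquiv 2 ℝ (fun _ : Fin d => ℝ) with hL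
  have hK : IsCompact (L.toHomeomorph ⁻¹' (Set.Icc (0 : Fin d → ℝ) 1)) :=
    L.toHomeomorph.isCompact_preimage.mpr isCompact_Icc
  refine (hf.continuousOn.integrableOn_compact hK).mono_set fun x hx => ?_
  simp only [Set.mem_preimage, Set.mem_Icc, ContinuousLinearEquiv.coe_toHomeomorph, Pi.le_def]
  exact ⟨fun i => (hx i).1, fun i => le_of_lt (hx i).2⟩

lemma cube_integral_pos (hd : 1 ≤ d) (f : E → ℝ) (hf : Continuous f)
    (hnonneg : ∀ x, 0 ≤ f x) (hper : ZdPeriodic f) (x₀ : E) (hx₀ : 0 < f x₀) :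
    0 < ∫ x in unitCube d, f x := by
  set nn : Fin d → ℤ := fun i => -⌊x₀ i⌋ with hnn
  set x₁ : E := x₀ + (WithLp.equiv 2 (Fin d → ℝ)).symm (fun i => (nn i : ℝ)) with hx₁
  have hx₁coord : ∀ i, x₁ i = Int.fract (x₀ i) := by
    intro i
    have h : x₁ i = x₀ i + ((-⌊x₀ i⌋ : ℤ) : ℝ) := rfl
    rw [h]; push_cast; rw [Int.fract]; ring
  have hx₁mem : x₁ ∈ unitCube d := by
    intro i; rw [hx₁coord i]
    exact ⟨Int.fract_nonneg _, Int.fract_lt_one _⟩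
  have hfx₁ : f x₁ = f x₀ := hper x₀ nn
  have hpos : 0 < f x₁ := by rw [hfx₁]; exact hx₀
  set U : Set (EuclideanSpace ℝ (Fin d)) := f ⁻¹' Set.Ioi (f x₁ / 2) with hU
  have hUopen : IsOpen U := isOpen_Ioi.preimage hf
  have hx₁U : x₁ ∈ U := by simp [hU, Set.mem_Ioi]; linarith
  have hmeas : 0 < volume (Function.support f ∩ unitCube d) := by
    have hmp := EuclideanSpace.volume_preserving_symm_measurableEquiv_toLp (Fin d)
    set e := (MeasurableEquiv.toLp 2 (Fin d → ℝ)).symm with he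
    set y₁ : Fin d → ℝ := e x₁ with hy₁
    set V : Set (Fin d → ℝ) := e.symm ⁻¹' U with hV
    have hVopen : IsOpen V := by
      have h : Continuous (e.symm : (Fin d → ℝ) → EuclideanSpace ℝ (Fin d)) :=
        (PiLp.continuousLinearEquiv 2 ℝ (fun _ : Fin d => ℝ)).symm.continuous
      exact hUopen.preimage h
    have hy₁V : y₁ ∈ V := by
      have h : e.symm y₁ = x₁ := rfl
      simp [hV, h, hx₁U]
    obtain ⟨ε, hε, hball⟩ := Metric.isOpen_iff.mp hVopen y₁ hy₁V
    set δ : ℝ := min (ε / 2) 1 with hδ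
    have hδpos : 0 < δ := lt_min (by linarith) one_pos
    set box : Set (Fin d → ℝ) := Set.pi Set.univ (fun i => Ico (y₁ i) (min (y₁ i + δ) 1))
      with hbox
    have hboxV : box ⊆ V := by
      intro y hy
      apply hball
      rw [Metric.mem_ball]
      by_cases hd0 : d = 0
      · omega
      rw [dist_pi_lt_iff hε]
      intro i
      have h1 := hy i (Set.mem_univ i)
      rw [Real.dist_eq, abs_lt]
      have h2 : y i < y₁ i + δ := lt_of_lt_of_le h1.2 (min_le_left _ _)
      have h3 : δ ≤ ε / 2 := min_le_left _ _
      constructor <;> [linarith [h1.1]; linarith [h1.1, h1.2]]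
    have hboxQ : box ⊆ e.symm ⁻¹' (unitCube d) := by
      intro y hy i
      have h1 := hy i (Set.mem_univ i)
      have h2 : (e.symm y : EuclideanSpace ℝ (Fin d)) i = y i := rfl
      have h3 := hx₁mem i
      have hy₁i : y₁ i = x₁ i := rfl
      constructor
      · rw [h2]; exact le_trans h3.1 (by rw [← hy₁i]; exact h1.1)
      · rw [h2]; exact lt_of_lt_of_le h1.2 (min_le_right _ _)
    have hboxvol : 0 < volume box := by
      rw [hbox, volume_pi_pi]
      refine CanonicallyOrderedAdd.prod_pos.mpr fun i _ => ?_
      rw [Real.volume_Ico]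
      have h3 := hx₁mem i
      have hy₁i : y₁ i = x₁ i := rfl
      have h4 : y₁ i < min (y₁ i + δ) 1 := lt_min (by linarith) (by rw [hy₁i]; exact h3.2)
      simpa using ENNReal.ofReal_pos.mpr (by linarith : (0:ℝ) < min (y₁ i + δ) 1 - y₁ i)
    have hsub : box ⊆ e.symm ⁻¹' (Function.support f ∩ unitCube d) := by
      intro y hy
      refine ⟨?_, hboxQ hy⟩
      have h5 := hboxV hy
      simp only [hV, Set.mem_preimage, hU, Set.mem_Ioi] at h5
      exact Function.mem_support.mpr (ne_of_gt (by linarith))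
    have hSmeas : MeasurableSet (Function.support f ∩ unitCube d) := by
      refine MeasurableSet.inter ?_ measurableSet_unitCube
      have h : Function.support f = f ⁻¹' ({0}ᶜ) := by
        ext z; simp [Function.mem_support]
      rw [h]
      exact (isOpen_compl_singleton.preimage hf).measurableSet
    have h6 : volume (e.symm ⁻¹' (Function.support f ∩ unitCube d))
        = volume (Function.support f ∩ unitCube d) :=
      (MeasurePreserving.symm e hmp).measure_preimage hSmeas.nullMeasurableSet
    calc (0:ENNReal) < volume box := hboxvol
      _ ≤ volume (e.symm ⁻¹' (Function.support f ∩ unitCube d)) := measure_mono hsub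
      _ = volume (Function.support f ∩ unitCube d) := h6
  rw [setIntegral_pos_iff_support_of_nonneg_ae (Filter.Eventually.of_forall hnonneg)
    (integrableOn_unitCube f hf)]
  exact hmeas

end Aux

/-- The feature matrix `H_{ij} = ∫_Q φ_i ℒφ_j m` has positive-definite symmetric part:
`θᵀHθ > 0` for every `θ ≠ 0`; in particular `H` is invertible. -/
theorem feature_matrix_posdef
    (d n : ℕ) (hd : 1 ≤ d) (ρ σ : ℝ) (hρ : 0 < ρ) (hσ : 0 < σ)
    (b : EuclideanSpace ℝ (Fin d) → EuclideanSpace ℝ (Fin d))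
    (hb : ContDiff ℝ 1 b) (hbper : ZdPeriodic b)
    (m : EuclideanSpace ℝ (Fin d) → ℝ)
    (hm : ContDiff ℝ 2 m) (hmper : ZdPeriodic m) (hmpos : ∀ x, 0 < m x)
    (hstat : ∀ x, σ ^ 2 / 2 * lapl m x - divg (fun y => m y • b y) x = 0)
    (φ : Fin n → EuclideanSpace ℝ (Fin d) → ℝ)
    (hφ : ∀ i, ContDiff ℝ 2 (φ i)) (hφper : ∀ i, ZdPeriodic (φ i))
    (hφli : LinearIndependent ℝ φ)
    (H : Matrix (Fin n) (Fin n) ℝ)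
    (hH : ∀ i j, H i j = ∫ x in unitCube d, φ i x * gen ρ σ b (φ j) x * m x) :
    (∀ θ : Fin n → ℝ, θ ≠ 0 → 0 < θ ⬝ᵥ H.mulVec θ) ∧
    (((1 : ℝ) / 2) • (H + Hᵀ)).PosDef ∧ IsUnit H := by
  classical
  have hm1 : ContDiff ℝ 1 m := hm.of_le (by norm_num)
  have hmd : Differentiable ℝ m := hm1.differentiable one_ne_zero
  have hbco : ∀ i, ContDiff ℝ 1 (fun y => b y i) := fun i => contDiff_euclidean.mp hb i
  have hbd : ∀ i, Differentiable ℝ (fun y => b y i) := fun i => (hbco i).differentiable one_ne_zero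
  have hpm1 : ∀ i, ContDiff ℝ 1 (pdi i m) := fun i => contDiff_pdi_one hm i
  have hstat' : ∀ x, ∑ i, pdi i (fun y => m y * b y i) x
      = σ ^ 2 / 2 * ∑ i, pdi i (pdi i m) x := by
    intro x
    have h := hstat x
    rw [lapl_eq hm] at h
    have hdd : divg (fun y => m y • b y) x = ∑ i, pdi i (fun y => m y * b y i) x := rfl
    rw [hdd] at h
    linarith
  have key : ∀ θ : Fin n → ℝ, θ ≠ 0 → 0 < θ ⬝ᵥ H.mulVec θ := by
    intro θ hθ
    set Q := unitCube d with hQ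
    set w : EuclideanSpace ℝ (Fin d) → ℝ := fun x => ∑ j, θ j * φ j x with hwdef
    have hw2 : ContDiff ℝ 2 w := ContDiff.sum fun j _ => contDiff_const.mul (hφ j)
    have hw1 : ContDiff ℝ 1 w := hw2.of_le (by norm_num)
    have hwd : Differentiable ℝ w := hw1.differentiable one_ne_zero
    have hwper : ZdPeriodic w := by
      intro x nn
      simp only [hwdef]
      exact Finset.sum_congr rfl fun j _ => by rw [hφper j x nn]
    have hφd : ∀ j, Differentiable ℝ (φ j) := fun j => (hφ j).differentiable (by norm_num)
    have hpw1 : ∀ i, ContDiff ℝ 1 (pdi i w) := fun i => contDiff_pdi_one hw2 i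
    have hpwd : ∀ i, Differentiable ℝ (pdi i w) := fun i => (hpw1 i).differentiable one_ne_zero
    have hpmd : ∀ i, Differentiable ℝ (pdi i m) := fun i => (hpm1 i).differentiable one_ne_zero
    -- pdi of w as linear combination
    have h1 : ∀ i x, pdi i w x = ∑ j, θ j * pdi i (φ j) x := fun i x =>
      pdi_sum (fun j => hφd j x) θ i
    have h2 : ∀ i x, pdi i (pdi i w) x = ∑ j, θ j * pdi i (pdi i (φ j)) x := by
      intro i x
      have hfun : pdi i w = fun y => ∑ j, θ j * pdi i (φ j) y := funext fun y => h1 i y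
      rw [hfun]
      exact pdi_sum (fun j => ((contDiff_pdi_one (hφ j) i).differentiable one_ne_zero) x) θ i
    set gg : Fin n → EuclideanSpace ℝ (Fin d) → ℝ := fun j x =>
      ρ * φ j x - σ ^ 2 / 2 * ∑ i, pdi i (pdi i (φ j)) x - ∑ i, b x i * pdi i (φ j) x
      with hggdef
    have hgen : ∀ j x, gen ρ σ b (φ j) x = gg j x := fun j x => gen_eq (hφ j) x
    have hggcont : ∀ j, Continuous (gg j) := by
      intro j
      refine ((continuous_const.mul (hφ j).continuous).sub (continuous_const.mul
        (continuous_finset_sum _ fun i _ => continuous_pdi (contDiff_pdi_one (hφ j) i) i))).sub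
        (continuous_finset_sum _ fun i _ => ((hbco i).continuous.mul
          (continuous_pdi ((hφ j).of_le (by norm_num)) i)))
    have hfijcont : ∀ i j, Continuous fun x => φ i x * gg j x * m x := fun i j =>
      (((hφ i).continuous.mul (hggcont j)).mul hm.continuous)
    have hfij_int : ∀ i j, IntegrableOn (fun x => φ i x * gg j x * m x) Q := fun i j =>
      integrableOn_unitCube _ (hfijcont i j)
    have hHij : ∀ i j, H i j = ∫ x in Q, φ i x * gg j x * m x := by
      intro i j
      rw [hH i j]
      exact setIntegral_congr_fun measurableSet_unitCube fun x _ => by rw [hgen]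
    -- step 1 : θᵀHθ as a double sum of integrals
    have hstep1 : θ ⬝ᵥ H.mulVec θ
        = ∑ i, ∑ j, ∫ x in Q, (θ i * θ j) * (φ i x * gg j x * m x) := by
      simp only [dotProduct, Matrix.mulVec]
      refine Finset.sum_congr rfl fun i _ => ?_
      rw [Finset.mul_sum]
      refine Finset.sum_congr rfl fun j _ => ?_
      rw [hHij, MeasureTheory.integral_const_mul]
      ring
    have hstep2 : θ ⬝ᵥ H.mulVec θ
        = ∫ x in Q, ∑ i, ∑ j, (θ i * θ j) * (φ i x * gg j x * m x) := by
      rw [hstep1]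
      have hin : ∀ i : Fin n, ∑ j, ∫ x in Q, (θ i * θ j) * (φ i x * gg j x * m x)
          = ∫ x in Q, ∑ j, (θ i * θ j) * (φ i x * gg j x * m x) :=
        fun i => (integral_finset_sum _ fun j _ => (hfij_int i j).const_mul _).symm
      rw [Finset.sum_congr rfl fun i _ => hin i]
      exact (integral_finset_sum _ fun i _ => integrable_finset_sum _
        (fun j _ => (hfij_int i j).const_mul _)).symm
    -- pointwise linearity
    have hA : ∀ x, ∑ j, θ j * gg j x = ρ * w x - σ ^ 2 / 2 * ∑ i, pdi i (pdi i w) x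
        - ∑ i, b x i * pdi i w x := by
      intro x
      simp only [hggdef, mul_sub, Finset.sum_sub_distrib]
      congr 1
      · congr 1
        · simp only [hwdef]
          rw [Finset.mul_sum]
          exact Finset.sum_congr rfl fun j _ => by ring
        · calc ∑ j, θ j * (σ ^ 2 / 2 * ∑ i, pdi i (pdi i (φ j)) x)
              = ∑ j, ∑ i, σ ^ 2 / 2 * (θ j * pdi i (pdi i (φ j)) x) := by
                refine Finset.sum_congr rfl fun j _ => ?_
                rw [Finset.mul_sum, Finset.mul_sum]
                exact Finset.sum_congr rfl fun i _ => by ring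
            _ = ∑ i, ∑ j, σ ^ 2 / 2 * (θ j * pdi i (pdi i (φ j)) x) := Finset.sum_comm
            _ = σ ^ 2 / 2 * ∑ i, pdi i (pdi i w) x := by
                rw [Finset.mul_sum]
                refine Finset.sum_congr rfl fun i _ => ?_
                rw [h2 i x, Finset.mul_sum]
      · calc ∑ j, θ j * ∑ i, b x i * pdi i (φ j) x
            = ∑ j, ∑ i, θ j * (b x i * pdi i (φ j) x) := by
              exact Finset.sum_congr rfl fun j _ => Finset.mul_sum _ _ _
          _ = ∑ i, ∑ j, θ j * (b x i * pdi i (φ j) x) := Finset.sum_comm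
          _ = ∑ i, b x i * pdi i w x := by
              refine Finset.sum_congr rfl fun i _ => ?_
              rw [h1 i x, Finset.mul_sum]
              exact Finset.sum_congr rfl fun j _ => by ring
    have hpointlin : ∀ x, ∑ i, ∑ j, (θ i * θ j) * (φ i x * gg j x * m x)
        = w x * (ρ * w x - σ ^ 2 / 2 * ∑ i, pdi i (pdi i w) x
            - ∑ i, b x i * pdi i w x) * m x := by
      intro x
      rw [← hA x]
      rw [show w x = ∑ i, θ i * φ i x from rfl, Finset.sum_mul, Finset.sum_mul]
      refine Finset.sum_congr rfl fun i _ => ?_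
      rw [Finset.mul_sum, Finset.sum_mul]
      refine Finset.sum_congr rfl fun j _ => ?_
      ring
    -- the auxiliary vector field
    set Gi : Fin d → EuclideanSpace ℝ (Fin d) → ℝ := fun i y =>
      σ ^ 2 / 2 * (w y * w y * pdi i m y / 2 - w y * (m y * pdi i w y))
        - w y * w y * (m y * b y i) / 2 with hGidef
    set G : EuclideanSpace ℝ (Fin d) → EuclideanSpace ℝ (Fin d) := fun y =>
      (WithLp.equiv 2 (Fin d → ℝ)).symm (fun i => Gi i y) with hGdef
    have hGiC : ∀ i, ContDiff ℝ 1 (Gi i) := by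
      intro i
      simp only [hGidef]
      refine ContDiff.sub ?_ ?_
      · exact contDiff_const.mul ((((hw1.mul hw1).mul (hpm1 i)).div_const (2:ℝ)).sub
          (hw1.mul (hm1.mul (hpw1 i))))
      · exact ((hw1.mul hw1).mul (hm1.mul (hbco i))).div_const (2:ℝ)
    have hGC : ContDiff ℝ 1 G := by
      refine contDiff_euclidean.mpr fun i => ?_
      exact hGiC i
    have hGper : ZdPeriodic G := by
      intro x nn
      simp only [hGdef]
      congr 1
      funext i
      have e1 : w (x + (WithLp.equiv 2 (Fin d → ℝ)).symm fun i => ((nn i : ℤ) : ℝ)) = w x :=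
        hwper x nn
      have e2 := hmper x nn
      have e3 := pdi_periodic hmd hmper i x nn
      have e4 := pdi_periodic hwd hwper i x nn
      have e5 : b (x + (WithLp.equiv 2 (Fin d → ℝ)).symm fun i => ((nn i : ℤ) : ℝ)) i = b x i := by
        rw [hbper x nn]
      simp only [hGidef]
      rw [e1, e2, e3, e4, e5]
    -- pointwise divergence formula
    have hdivGpt : ∀ x, divg G x
        = σ ^ 2 / 2 * (w x * w x / 2) * (∑ i, pdi i (pdi i m) x)
          - σ ^ 2 / 2 * m x * (∑ i, pdi i w x * pdi i w x)
          - σ ^ 2 / 2 * (w x * m x) * (∑ i, pdi i (pdi i w) x)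
          - w x * m x * (∑ i, b x i * pdi i w x)
          - w x * w x / 2 * (∑ i, pdi i (fun y => m y * b y i) x) := by
      intro x
      have hco : divg G x = ∑ i, pdi i (Gi i) x := by
        unfold divg
        exact Finset.sum_congr rfl fun i _ => rfl
      rw [hco]
      have hterm : ∀ i, pdi i (Gi i) x
          = σ ^ 2 / 2 * (w x * w x / 2) * pdi i (pdi i m) x
            - σ ^ 2 / 2 * m x * (pdi i w x * pdi i w x)
            - σ ^ 2 / 2 * (w x * m x) * pdi i (pdi i w) x
            - w x * m x * (b x i * pdi i w x)
            - w x * w x / 2 * pdi i (fun y => m y * b y i) x := by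
        intro i
        have d1 : DifferentiableAt ℝ w x := hwd x
        have d2 : DifferentiableAt ℝ m x := hmd x
        have d3 : DifferentiableAt ℝ (pdi i m) x := hpmd i x
        have d4 : DifferentiableAt ℝ (pdi i w) x := hpwd i x
        have d5 : DifferentiableAt ℝ (fun y => b y i) x := hbd i x
        have dA : DifferentiableAt ℝ (fun y => w y * w y * pdi i m y / 2) x :=
          ((((hw1.mul hw1).mul (hpm1 i)).div_const (2:ℝ)).differentiable one_ne_zero) x
        have dB : DifferentiableAt ℝ (fun y => w y * (m y * pdi i w y)) x :=
          d1.mul (d2.mul d4)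
        have dC : DifferentiableAt ℝ (fun y => w y * w y * (m y * b y i)) x :=
          (d1.mul d1).mul (d2.mul d5)
        simp only [hGidef]
        have dC2 : DifferentiableAt ℝ (fun y => w y * w y * (m y * b y i) / 2) x :=
          ((((hw1.mul hw1).mul (hm1.mul (hbco i))).div_const (2:ℝ)).differentiable one_ne_zero) x
        rw [pdi_sub ((dA.fun_sub dB).const_mul (σ ^ 2 / 2)) dC2,
          pdi_const_mul (dA.fun_sub dB), pdi_sub dA dB,
          pdi_div_const ((d1.fun_mul d1).fun_mul d3), pdi_div_const dC,

          pdi_mul (d1.fun_mul d1) d3, pdi_mul d1 (d2.fun_mul d4),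
          pdi_mul d1 d1, pdi_mul d2 d4, pdi_mul (d1.fun_mul d1) (d2.fun_mul d5),
          pdi_mul d1 d1]
        ring
      rw [Finset.sum_congr rfl fun i _ => hterm i]
      simp only [Finset.sum_sub_distrib, ← Finset.mul_sum]
    have hkeypt : ∀ x, w x * (ρ * w x - σ ^ 2 / 2 * ∑ i, pdi i (pdi i w) x
          - ∑ i, b x i * pdi i w x) * m x
        = ρ * (w x * w x * m x)
          + σ ^ 2 / 2 * (m x * ∑ i, pdi i w x * pdi i w x) + divg G x := by
      intro x
      rw [hdivGpt x, hstat' x]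
      ring
    -- integrability
    have hcont1 : Continuous fun x => w x * w x * m x :=
      (hw1.continuous.mul hw1.continuous).mul hm.continuous
    have hcont2 : Continuous fun x => m x * ∑ i, pdi i w x * pdi i w x :=
      hm.continuous.mul (continuous_finset_sum _ fun i _ =>
        ((hpw1 i).continuous.mul (hpw1 i).continuous))
    have hint1 : IntegrableOn (fun x => w x * w x * m x) Q :=
      integrableOn_unitCube _ hcont1
    have hint2 : IntegrableOn (fun x => m x * ∑ i, pdi i w x * pdi i w x) Q :=
      integrableOn_unitCube _ hcont2
    have hintG : IntegrableOn (divg G) Q := by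
      have hc : Continuous (divg G) := by
        have heq : divg G = fun x =>
            σ ^ 2 / 2 * (w x * w x / 2) * (∑ i, pdi i (pdi i m) x)
            - σ ^ 2 / 2 * m x * (∑ i, pdi i w x * pdi i w x)
            - σ ^ 2 / 2 * (w x * m x) * (∑ i, pdi i (pdi i w) x)
            - w x * m x * (∑ i, b x i * pdi i w x)
            - w x * w x / 2 * (∑ i, pdi i (fun y => m y * b y i) x) := funext hdivGpt
        rw [heq]
        have c1 : Continuous w := hw1.continuous
        have c2 : Continuous m := hm.continuous
        refine ((((Continuous.mul ?_ ?_).sub (Continuous.mul ?_ ?_)).sub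
          (Continuous.mul ?_ ?_)).sub (Continuous.mul ?_ ?_)).sub (Continuous.mul ?_ ?_)
        · exact continuous_const.mul ((c1.mul c1).div_const (2:ℝ))
        · exact continuous_finset_sum _ fun i _ => continuous_pdi (hpm1 i) i
        · exact continuous_const.mul c2
        · exact continuous_finset_sum _ fun i _ =>
            (hpw1 i).continuous.mul (hpw1 i).continuous
        · exact continuous_const.mul (c1.mul c2)
        · exact continuous_finset_sum _ fun i _ => continuous_pdi (hpw1 i) i
        · exact c1.mul c2
        · exact continuous_finset_sum _ fun i _ =>
            ((hbco i).continuous.mul (hpw1 i).continuous)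
        · exact (c1.mul c1).div_const (2:ℝ)
        · exact continuous_finset_sum _ fun i _ => continuous_pdi (hm1.mul (hbco i)) i
      exact integrableOn_unitCube _ hc
    have hG0 : ∫ x in Q, divg G x = 0 := divg_integral_zero hd G hGC hGper
    have hIeq : ∫ x in Q, w x * (ρ * w x - σ ^ 2 / 2 * ∑ i, pdi i (pdi i w) x
          - ∑ i, b x i * pdi i w x) * m x
        = ρ * (∫ x in Q, w x * w x * m x)
          + σ ^ 2 / 2 * (∫ x in Q, m x * ∑ i, pdi i w x * pdi i w x)
          + ∫ x in Q, divg G x := by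
      calc ∫ x in Q, w x * (ρ * w x - σ ^ 2 / 2 * ∑ i, pdi i (pdi i w) x
            - ∑ i, b x i * pdi i w x) * m x
          = ∫ x in Q, (ρ * (w x * w x * m x)
            + σ ^ 2 / 2 * (m x * ∑ i, pdi i w x * pdi i w x) + divg G x) :=
            setIntegral_congr_fun measurableSet_unitCube fun x _ => hkeypt x
        _ = ρ * (∫ x in Q, w x * w x * m x)
            + σ ^ 2 / 2 * (∫ x in Q, m x * ∑ i, pdi i w x * pdi i w x)
            + ∫ x in Q, divg G x := by
            have hAB : IntegrableOn (fun x => ρ * (w x * w x * m x)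
                + σ ^ 2 / 2 * (m x * ∑ i, pdi i w x * pdi i w x)) Q :=
              (hint1.const_mul ρ).add (hint2.const_mul (σ ^ 2 / 2))
            have hA' : IntegrableOn (fun x => ρ * (w x * w x * m x)) Q :=
              hint1.const_mul ρ
            have hB' : IntegrableOn (fun x =>
                σ ^ 2 / 2 * (m x * ∑ i, pdi i w x * pdi i w x)) Q :=
              hint2.const_mul (σ ^ 2 / 2)
            rw [integral_add hAB hintG, integral_add hA' hB',
              MeasureTheory.integral_const_mul, MeasureTheory.integral_const_mul]
    -- positivity
    have hwne : ∃ x₀, w x₀ ≠ 0 := by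
      by_contra hcon
      push_neg at hcon
      apply hθ
      have hzero : ∑ j, θ j • φ j = 0 := by
        funext x
        rw [Finset.sum_apply]
        simp only [Pi.smul_apply, smul_eq_mul, Pi.zero_apply]
        exact hcon x
      have hall := Fintype.linearIndependent_iff.mp hφli θ hzero
      funext i
      exact hall i
    obtain ⟨x₀, hx₀⟩ := hwne
    have hpos1 : 0 < ∫ x in Q, w x * w x * m x := by
      refine cube_integral_pos hd _ hcont1
        (fun x => mul_nonneg (mul_self_nonneg _) (hmpos x).le) ?_ x₀
        (mul_pos (mul_self_pos.mpr hx₀) (hmpos x₀))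
      intro x nn
      simp only
      rw [hwper x nn, hmper x nn]
    have hpos2 : 0 ≤ ∫ x in Q, m x * ∑ i, pdi i w x * pdi i w x :=
      setIntegral_nonneg measurableSet_unitCube fun x _ =>
        mul_nonneg (hmpos x).le (Finset.sum_nonneg fun i _ => mul_self_nonneg _)
    rw [hstep2, setIntegral_congr_fun measurableSet_unitCube fun x _ => hpointlin x,
      hIeq, hG0, add_zero]
    have hterm1 : 0 < ρ * ∫ x in Q, w x * w x * m x := mul_pos hρ hpos1
    have hterm2 : 0 ≤ σ ^ 2 / 2 * ∫ x in Q, m x * ∑ i, pdi i w x * pdi i w x :=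
      mul_nonneg (by positivity) hpos2
    linarith
  refine ⟨key, Matrix.posDef_iff_dotProduct_mulVec.mpr ⟨?_, ?_⟩, ?_⟩
  · -- Hermitian
    show (((1 : ℝ) / 2) • (H + Hᵀ))ᴴ = ((1 : ℝ) / 2) • (H + Hᵀ)
    ext i j
    simp [Matrix.conjTranspose_apply, Matrix.add_apply, Matrix.transpose_apply, add_comm]
    ring
  · -- positivity of the symmetric part
    intro x hx
    have hsx : star x = x := by funext i; simp
    have h1 : x ⬝ᵥ (Hᵀ *ᵥ x) = x ⬝ᵥ (H *ᵥ x) := by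
      rw [Matrix.dotProduct_mulVec, Matrix.vecMul_transpose, dotProduct_comm]
    have hcomp : star x ⬝ᵥ (((1 : ℝ) / 2) • (H + Hᵀ)) *ᵥ x = x ⬝ᵥ H *ᵥ x := by
      rw [hsx, Matrix.smul_mulVec, Matrix.add_mulVec, dotProduct_smul,
        dotProduct_add, h1]
      simp [smul_eq_mul]
      ring
    rw [hcomp]
    exact key x hx
  · -- invertibility
    rw [Matrix.isUnit_iff_isUnit_det, isUnit_iff_ne_zero]
    intro hdet
    obtain ⟨v, hv0, hv⟩ := Matrix.exists_mulVec_eq_zero_iff.mpr hdet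
    have hkv := key v hv0
    rw [hv] at hkv
    simp at hkv
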